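/- Let W ∈ ℝ^{n×m} with W = [W₁; W₂], W₁ ∈ ℝ^{m×m}, W₂ ∈ ℝ^{(n−m)×m} full rank, Ω ∈ ℝ^{ℓ×(n−m)} such that ΩW₂ is full rank, and Ψ = diag(I_m, Ω). Then there exist randomized Householder vectors u₁,…,u_m ∈ ℝ^n and an upper-triangular R ∈ ℝ^{m×m} such that W = P(u₁,Ψ)⋯P(u_m,Ψ)·[R; 0_{(n−m)×m}], and moreover ΨW = P(Ψu₁)⋯P(Ψu_m)·[R; 0_{ℓ×m}] is the classical Householder QR factorization of ΨW. In particular, the thin Q factor Q = P(u₁,Ψ)⋯P(u_m,Ψ)·[I_m; 0_{(n−m)×m}] satisfies (ΨQ)ᵀ(ΨQ) = I_m. -/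

import Mathlib

open Matrix

/-- The randomized Householder reflector `P(z, Ψ) = I - (2/‖Ψz‖²) z (Ψz)ᵀ Ψ`. -/
noncomputable def rhouse {ι κ : Type*} [Fintype ι] [Fintype κ] [DecidableEq κ]
    (Θ : Matrix ι κ ℝ) (z : κ → ℝ) : Matrix κ κ ℝ :=
  1 - (2 / ((Θ.mulVec z) ⬝ᵥ (Θ.mulVec z))) • (Matrix.vecMulVec z (Θ.mulVec z) * Θ)

/-- The classical Householder reflector `P(v) = I - (2/‖v‖²) v vᵀ`. -/
noncomputable def house {ι : Type*} [Fintype ι] [DecidableEq ι] (v : ι → ℝ) :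
    Matrix ι ι ℝ :=
  1 - (2 / (v ⬝ᵥ v)) • Matrix.vecMulVec v v

/-- Stack a matrix on top of a zero block: `[R; 0]`. -/
def padTop {α β γ : Type*} (R : Matrix α γ ℝ) : Matrix (α ⊕ β) γ ℝ :=
  Matrix.of fun i j => Sum.elim (fun a => R a j) (fun _ => 0) i

set_option linter.unusedSectionVars false

namespace RHQRaux

variable {ι κ μ ν σ : Type*} [Fintype ι] [Fintype κ] [Fintype μ] [Fintype σ]

lemma vecMulVec_mulVec (a : ι → ℝ) (b : κ → ℝ) (y : κ → ℝ) :
    (vecMulVec a b) *ᵥ y = (b ⬝ᵥ y) • a := by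
  ext i
  simp only [vecMulVec_apply, mulVec, dotProduct, Pi.smul_apply, smul_eq_mul, of_apply]
  rw [Finset.sum_mul]
  exact Finset.sum_congr rfl fun x _ => by ring

lemma mul_vecMulVec (C : Matrix μ ι ℝ) (a : ι → ℝ) (b : κ → ℝ) :
    C * vecMulVec a b = vecMulVec (C *ᵥ a) b := by
  ext i j
  simp only [mul_apply, vecMulVec_apply, of_apply, mulVec, dotProduct, Finset.sum_mul]
  exact Finset.sum_congr rfl fun x _ => by ring

lemma vecMulVec_mul_vecMulVec (a : ι → ℝ) (b c : κ → ℝ) (d : μ → ℝ) :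
    vecMulVec a b * vecMulVec c d = (b ⬝ᵥ c) • vecMulVec a d := by
  ext i j
  simp only [mul_apply, vecMulVec_apply, of_apply, Matrix.smul_apply, smul_eq_mul, dotProduct,
    Finset.sum_mul]
  exact Finset.sum_congr rfl fun x _ => by ring

lemma reflect_sq {A : Matrix κ κ ℝ} [DecidableEq κ] {s : ℝ} (hs : s ≠ 0) (hA : A * A = s • A) :
    (1 - (2/s) • A) * (1 - (2/s) • A) = 1 := by
  have h2 : (2/s) * (2/s) * s = 2/s + 2/s := by field_simp; ring
  rw [sub_mul, mul_sub, mul_sub, one_mul, mul_one, one_mul, Matrix.mul_smul, Matrix.smul_mul,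
    hA, smul_smul, smul_smul, h2, add_smul]
  abel

lemma house_transpose [DecidableEq ι] (v : ι → ℝ) : (house v)ᵀ = house v := by
  unfold house
  rw [transpose_sub, transpose_one, transpose_smul]
  congr 2
  ext i j
  simp [vecMulVec_apply, mul_comm]

lemma house_mul_house [DecidableEq ι] {v : ι → ℝ} (hv : v ≠ 0) : house v * house v = 1 := by
  have hs : v ⬝ᵥ v ≠ 0 := fun h => hv (dotProduct_self_eq_zero.mp h)
  exact reflect_sq hs (vecMulVec_mul_vecMulVec v v v v)

lemma rhouse_mul_rhouse [DecidableEq ι] {Θ : Matrix σ ι ℝ} {z : ι → ℝ} (hz : Θ *ᵥ z ≠ 0) :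
    rhouse Θ z * rhouse Θ z = 1 := by
  set w := Θ *ᵥ z with hw
  have hs : w ⬝ᵥ w ≠ 0 := fun h => hz (dotProduct_self_eq_zero.mp h)
  refine reflect_sq hs ?_
  calc (vecMulVec z w * Θ) * (vecMulVec z w * Θ)
      = vecMulVec z w * (Θ * vecMulVec z w) * Θ := by simp only [Matrix.mul_assoc]
    _ = vecMulVec z w * vecMulVec w w * Θ := by rw [mul_vecMulVec]
    _ = (w ⬝ᵥ w) • (vecMulVec z w * Θ) := by
        rw [vecMulVec_mul_vecMulVec, Matrix.smul_mul]

lemma rhouse_mulVec [DecidableEq ι] (Θ : Matrix σ ι ℝ) (z : ι → ℝ) (y : ι → ℝ) :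
    rhouse Θ z *ᵥ y =
      y - ((2 / ((Θ *ᵥ z) ⬝ᵥ (Θ *ᵥ z))) * ((Θ *ᵥ z) ⬝ᵥ (Θ *ᵥ y))) • z := by
  set w := Θ *ᵥ z with hw
  unfold rhouse
  rw [Matrix.sub_mulVec, Matrix.one_mulVec, Matrix.smul_mulVec]
  congr 1
  rw [← Matrix.mulVec_mulVec, vecMulVec_mulVec, smul_smul]

lemma mul_rhouse [DecidableEq ι] [DecidableEq σ] (Θ : Matrix σ ι ℝ) (z : ι → ℝ) :
    Θ * rhouse Θ z = house (Θ *ᵥ z) * Θ := by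
  set w := Θ *ᵥ z with hw
  unfold rhouse house
  rw [Matrix.mul_sub, Matrix.mul_one, Matrix.sub_mul, Matrix.one_mul, Matrix.mul_smul, Matrix.smul_mul]
  congr 2
  rw [← Matrix.mul_assoc, mul_vecMulVec]

lemma mulVec_injective_of_invol {B : Matrix κ κ ℝ} [DecidableEq κ] (h : B * B = 1) :
    Function.Injective B.mulVec := fun x y hxy => by
  have := congrArg B.mulVec hxy
  rwa [Matrix.mulVec_mulVec, Matrix.mulVec_mulVec, h, Matrix.one_mulVec, Matrix.one_mulVec] at this

lemma mul_col {A : Matrix μ κ ℝ} {B : Matrix κ ι ℝ} (i : μ) (c : ι) :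
    (A * B) i c = (A *ᵥ (fun r => B r c)) i := by
  simp [mul_apply, mulVec, dotProduct]

lemma theta_mul_prod {β : Type*} [DecidableEq ι] [DecidableEq σ] (Θ : Matrix σ ι ℝ)
    (u : β → ι → ℝ) (L : List β) :
    Θ * (L.map fun t => rhouse Θ (u t)).prod = (L.map fun t => house (Θ *ᵥ u t)).prod * Θ := by
  induction L with
  | nil => simp
  | cons h T ih =>
      simp only [List.map_cons, List.prod_cons]
      rw [← Matrix.mul_assoc, mul_rhouse, Matrix.mul_assoc, ih, Matrix.mul_assoc]

lemma prod_house_orth {β : Type*} [DecidableEq σ] (v : β → σ → ℝ) (L : List β)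
    (hv : ∀ t ∈ L, v t ≠ 0) :
    ((L.map fun t => house (v t)).prod)ᵀ * (L.map fun t => house (v t)).prod = 1 := by
  induction L with
  | nil => simp
  | cons h T ih =>
      simp only [List.map_cons, List.prod_cons, transpose_mul]
      have h1 : house (v h) * house (v h) = 1 := house_mul_house (hv h (by simp))
      calc ((T.map fun t => house (v t)).prod)ᵀ * (house (v h))ᵀ *
            (house (v h) * (T.map fun t => house (v t)).prod)
          = ((T.map fun t => house (v t)).prod)ᵀ *
              (((house (v h))ᵀ * house (v h)) * (T.map fun t => house (v t)).prod) := by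
            noncomm_ring
        _ = 1 := by
            rw [house_transpose, h1, Matrix.one_mul, ih (fun t ht => hv t (by simp [ht]))]



section Psi

variable {m k l : ℕ}

/-- `Ψ = diag(I, Ω)`. -/
def PsiM (m : ℕ) (Ω : Matrix (Fin l) (Fin k) ℝ) :
    Matrix (Fin m ⊕ Fin l) (Fin m ⊕ Fin k) ℝ :=
  fromBlocks 1 0 0 Ω

variable (Ω : Matrix (Fin l) (Fin k) ℝ)

lemma PsiM_mulVec_inl (y : Fin m ⊕ Fin k → ℝ) (a : Fin m) :
    (PsiM m Ω *ᵥ y) (Sum.inl a) = y (Sum.inl a) := by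
  simp [PsiM, mulVec, dotProduct, Fintype.sum_sum_type, one_apply, ite_mul]

lemma PsiM_mulVec_inr (y : Fin m ⊕ Fin k → ℝ) (b : Fin l) :
    (PsiM m Ω *ᵥ y) (Sum.inr b) = (Ω *ᵥ fun t => y (Sum.inr t)) b := by
  simp [PsiM, mulVec, dotProduct, Fintype.sum_sum_type]

lemma PsiM_mulVec_single (j : Fin m) :
    PsiM m Ω *ᵥ (Pi.single (Sum.inl j) (1:ℝ)) = Pi.single (Sum.inl j) (1:ℝ) := by
  ext i
  cases i with
  | inl a =>
      rw [PsiM_mulVec_inl]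
      rcases eq_or_ne a j with h | h
      · subst h; rw [Pi.single_eq_same, Pi.single_eq_same]
      · rw [Pi.single_eq_of_ne (by simpa using h), Pi.single_eq_of_ne (by simpa using h)]
  | inr b =>
      rw [PsiM_mulVec_inr, Pi.single_eq_of_ne (by simp)]
      have : (fun t => Pi.single (M := fun _ => ℝ) (Sum.inl j) 1 (Sum.inr t)) = (0 : Fin k → ℝ) := by
        ext t; exact Pi.single_eq_of_ne (by simp) 1
      rw [this, Matrix.mulVec_zero]
      rfl

lemma PsiM_mul_padTop {γ : Type*} [Fintype γ] (R : Matrix (Fin m) γ ℝ) :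
    PsiM m Ω * padTop (β := Fin k) R = padTop (β := Fin l) R := by
  ext i j
  cases i with
  | inl a => simp [PsiM, padTop, mul_apply, Fintype.sum_sum_type, one_apply, ite_mul]
  | inr b => simp [PsiM, padTop, mul_apply, Fintype.sum_sum_type]

lemma padTop_transpose_mul_self :
    (padTop (β := Fin l) (1 : Matrix (Fin m) (Fin m) ℝ))ᵀ *
      padTop (β := Fin l) (1 : Matrix (Fin m) (Fin m) ℝ) = 1 := by
  ext a b
  simp only [padTop, mul_apply, Fintype.sum_sum_type, transpose_apply, of_apply, Sum.elim_inl,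
    Sum.elim_inr, mul_zero, Finset.sum_const_zero, add_zero, one_apply, ite_mul, one_mul, zero_mul]
  rw [Finset.sum_ite_eq' Finset.univ a fun x => if x = b then (1:ℝ) else 0]
  simp

end Psi
section Step

variable {m k l : ℕ} (Ω : Matrix (Fin l) (Fin k) ℝ)

/-- Zero out the first `j` entries of the top block. -/
def trunc (j : ℕ) (x : Fin m ⊕ Fin k → ℝ) : Fin m ⊕ Fin k → ℝ :=
  Sum.elim (fun a => if j ≤ (a : ℕ) then x (Sum.inl a) else 0) fun b => x (Sum.inr b)

noncomputable def sOf (j : Fin m) (x : Fin m ⊕ Fin k → ℝ) : ℝ :=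
  Real.sqrt ((PsiM m Ω *ᵥ trunc (j : ℕ) x) ⬝ᵥ (PsiM m Ω *ᵥ trunc (j : ℕ) x))

noncomputable def alphaOf (j : Fin m) (x : Fin m ⊕ Fin k → ℝ) : ℝ :=
  if 0 ≤ x (Sum.inl j) then -sOf Ω j x else sOf Ω j x

noncomputable def uvecOf (j : Fin m) (x : Fin m ⊕ Fin k → ℝ) : Fin m ⊕ Fin k → ℝ :=
  fun i => trunc (j : ℕ) x i - if i = Sum.inl j then alphaOf Ω j x else 0

variable (j : Fin m) (x : Fin m ⊕ Fin k → ℝ)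

lemma uvecOf_eq :
    uvecOf Ω j x = trunc (j : ℕ) x -
      alphaOf Ω j x • (Pi.single (Sum.inl j) 1 : Fin m ⊕ Fin k → ℝ) := by
  funext i
  simp only [Pi.sub_apply, Pi.smul_apply, Pi.single_apply, smul_eq_mul, uvecOf, mul_ite,
    mul_one, mul_zero]

lemma uvecOf_inl_lt {a : Fin m} (h : (a : ℕ) < (j : ℕ)) :
    uvecOf Ω j x (Sum.inl a) = 0 := by
  have hne : a ≠ j := Fin.ne_of_val_ne (Nat.ne_of_lt h)
  simp only [uvecOf, trunc, Sum.elim_inl]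
  rw [if_neg (Nat.not_le.mpr h), if_neg (by simp [hne]), sub_zero]

lemma uvecOf_inl_ge {a : Fin m} (h : (j : ℕ) ≤ (a : ℕ)) (hne : a ≠ j) :
    uvecOf Ω j x (Sum.inl a) = x (Sum.inl a) := by
  simp only [uvecOf, trunc, Sum.elim_inl]
  rw [if_pos h, if_neg (by simp [hne]), sub_zero]

lemma uvecOf_inr (b : Fin k) : uvecOf Ω j x (Sum.inr b) = x (Sum.inr b) := by
  simp only [uvecOf, trunc, Sum.elim_inr]
  rw [if_neg (by simp), sub_zero]

lemma uvecOf_inl_self : uvecOf Ω j x (Sum.inl j) = x (Sum.inl j) - alphaOf Ω j x := by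
  simp only [uvecOf, trunc, Sum.elim_inl]
  rw [if_pos le_rfl]
  simp

lemma psi_uvec :
    PsiM m Ω *ᵥ uvecOf Ω j x =
      (PsiM m Ω *ᵥ trunc (j : ℕ) x) -
        alphaOf Ω j x • (Pi.single (Sum.inl j) 1 : Fin m ⊕ Fin l → ℝ) := by
  rw [uvecOf_eq, Matrix.mulVec_sub, Matrix.mulVec_smul, PsiM_mulVec_single]

lemma psitrunc_inl_self :
    (PsiM m Ω *ᵥ trunc (j : ℕ) x) (Sum.inl j) = x (Sum.inl j) := by
  rw [PsiM_mulVec_inl]; simp [trunc]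

lemma step_preserve (y : Fin m ⊕ Fin k → ℝ)
    (hy1 : ∀ a : Fin m, (j : ℕ) ≤ (a : ℕ) → y (Sum.inl a) = 0)
    (hy2 : ∀ b, y (Sum.inr b) = 0) :
    rhouse (PsiM m Ω) (uvecOf Ω j x) *ᵥ y = y := by
  rw [rhouse_mulVec]
  have h0 : (PsiM m Ω *ᵥ uvecOf Ω j x) ⬝ᵥ (PsiM m Ω *ᵥ y) = 0 := by
    rw [dotProduct]
    apply Finset.sum_eq_zero
    intro i _
    cases i with
    | inl a =>
        rcases lt_or_ge (a : ℕ) (j : ℕ) with h | h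
        · rw [PsiM_mulVec_inl, uvecOf_inl_lt Ω j x h, zero_mul]
        · rw [PsiM_mulVec_inl Ω y a, hy1 a h, mul_zero]
    | inr b =>
        have : (PsiM m Ω *ᵥ y) (Sum.inr b) = 0 := by
          rw [PsiM_mulVec_inr]
          have hz : (fun t => y (Sum.inr t)) = (0 : Fin k → ℝ) := funext hy2
          rw [hz, Matrix.mulVec_zero]; rfl
        rw [this, mul_zero]
  rw [h0, mul_zero, zero_smul, sub_zero]

lemma step_main (hx : PsiM m Ω *ᵥ trunc (j : ℕ) x ≠ 0) :
    PsiM m Ω *ᵥ uvecOf Ω j x ≠ 0 ∧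
      rhouse (PsiM m Ω) (uvecOf Ω j x) *ᵥ x = x - uvecOf Ω j x := by
  set w' := PsiM m Ω *ᵥ trunc (j : ℕ) x with hw'
  set S := w' ⬝ᵥ w' with hSdef
  have hS0 : 0 ≤ S := Finset.sum_nonneg fun i _ => mul_self_nonneg (w' i)
  have hSne : S ≠ 0 := fun h => hx (dotProduct_self_eq_zero.mp h)
  have hSpos : 0 < S := lt_of_le_of_ne hS0 (Ne.symm hSne)
  set s := Real.sqrt S with hsdef
  have hss : s * s = S := Real.mul_self_sqrt hS0
  have hs0 : 0 ≤ s := Real.sqrt_nonneg _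
  set ξ := x (Sum.inl j) with hξ
  set α := alphaOf Ω j x with hα
  have hsof : sOf Ω j x = s := rfl
  have hαα : α * α = S := by
    rw [hα, alphaOf, hsof]
    split_ifs with h
    · rw [neg_mul_neg]; exact hss
    · exact hss
  have hSαξ : 0 < S - α * ξ := by
    rw [hα, alphaOf, hsof]
    split_ifs with h
    · nlinarith
    · push_neg at h
      nlinarith
  set w := PsiM m Ω *ᵥ uvecOf Ω j x with hwdef
  have hw : w = w' - α • (Pi.single (Sum.inl j) 1 : Fin m ⊕ Fin l → ℝ) := psi_uvec Ω j x
  have hw'j : w' (Sum.inl j) = ξ := psitrunc_inl_self Ω j x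
  have hd1 : w' ⬝ᵥ (Pi.single (Sum.inl j) 1 : Fin m ⊕ Fin l → ℝ) = ξ := by
    rw [dotProduct_single, mul_one, hw'j]
  have hd1' : (Pi.single (Sum.inl j) 1 : Fin m ⊕ Fin l → ℝ) ⬝ᵥ w' = ξ := by
    rw [single_dotProduct, one_mul, hw'j]
  have hd2 : (Pi.single (Sum.inl j) 1 : Fin m ⊕ Fin l → ℝ) ⬝ᵥ
      (Pi.single (Sum.inl j) 1 : Fin m ⊕ Fin l → ℝ) = 1 := by
    rw [single_dotProduct, one_mul, Pi.single_eq_same]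
  have hww : w ⬝ᵥ w = 2 * (S - α * ξ) := by
    rw [hw, sub_dotProduct, dotProduct_sub, dotProduct_sub, smul_dotProduct, smul_dotProduct,
      dotProduct_smul, dotProduct_smul, hd1, hd1', hd2, ← hSdef]
    simp only [smul_eq_mul]
    linear_combination hαα
  have hwne : w ≠ 0 := by
    intro h0
    rw [h0, zero_dotProduct] at hww
    linarith
  have h1 : w ⬝ᵥ w' = S - α * ξ := by
    rw [hw, sub_dotProduct, smul_dotProduct, hd1', ← hSdef]
    simp only [smul_eq_mul]
  have h2 : w ⬝ᵥ (PsiM m Ω *ᵥ (x - trunc (j : ℕ) x)) = 0 := by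
    set d := x - trunc (j : ℕ) x with hd
    have hd_inr : ∀ b, d (Sum.inr b) = 0 := by
      intro b; simp [hd, trunc]
    have hd_inl : ∀ a : Fin m, (j : ℕ) ≤ (a : ℕ) → d (Sum.inl a) = 0 := by
      intro a ha
      simp only [hd, Pi.sub_apply, trunc, Sum.elim_inl]
      rw [if_pos ha, sub_self]
    rw [dotProduct]
    apply Finset.sum_eq_zero
    intro i _
    cases i with
    | inl a =>
        rcases lt_or_ge (a : ℕ) (j : ℕ) with h | h
        · rw [hwdef, PsiM_mulVec_inl, uvecOf_inl_lt Ω j x h, zero_mul]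
        · rw [PsiM_mulVec_inl Ω d a, hd_inl a h, mul_zero]
    | inr b =>
        have : (PsiM m Ω *ᵥ d) (Sum.inr b) = 0 := by
          rw [PsiM_mulVec_inr]
          have hz : (fun t => d (Sum.inr t)) = (0 : Fin k → ℝ) := funext hd_inr
          rw [hz, Matrix.mulVec_zero]; rfl
        rw [this, mul_zero]
  have hwx : w ⬝ᵥ (PsiM m Ω *ᵥ x) = S - α * ξ := by
    have hxd : x = trunc (j : ℕ) x + (x - trunc (j : ℕ) x) := by abel
    calc w ⬝ᵥ (PsiM m Ω *ᵥ x)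
        = w ⬝ᵥ (PsiM m Ω *ᵥ (trunc (j : ℕ) x + (x - trunc (j : ℕ) x))) := by rw [← hxd]
      _ = w ⬝ᵥ w' + w ⬝ᵥ (PsiM m Ω *ᵥ (x - trunc (j : ℕ) x)) := by
          rw [Matrix.mulVec_add, dotProduct_add]
      _ = S - α * ξ := by rw [h1, h2, add_zero]
  refine ⟨hwne, ?_⟩
  rw [rhouse_mulVec]
  have hco : 2 / ((PsiM m Ω *ᵥ uvecOf Ω j x) ⬝ᵥ (PsiM m Ω *ᵥ uvecOf Ω j x)) *
      ((PsiM m Ω *ᵥ uvecOf Ω j x) ⬝ᵥ (PsiM m Ω *ᵥ x)) = 1 := by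
    rw [← hwdef, hww, hwx]
    field_simp
  rw [hco, one_smul]

end Step
section Build

variable {m k l : ℕ} (Ω : Matrix (Fin l) (Fin k) ℝ) (W : Matrix (Fin m ⊕ Fin k) (Fin m) ℝ)

noncomputable def Aseq : ℕ → Matrix (Fin m ⊕ Fin k) (Fin m) ℝ
  | 0 => W
  | j + 1 =>
      if h : j < m then
        rhouse (PsiM m Ω) (uvecOf Ω ⟨j, h⟩ fun i => Aseq j i ⟨j, h⟩) * Aseq j
      else Aseq j

noncomputable def useq (j : Fin m) : Fin m ⊕ Fin k → ℝ :=
  uvecOf Ω j fun i => Aseq Ω W (j : ℕ) i j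

lemma Aseq_succ (j : Fin m) :
    Aseq Ω W ((j : ℕ) + 1) = rhouse (PsiM m Ω) (useq Ω W j) * Aseq Ω W (j : ℕ) := by
  show (if h : (j : ℕ) < m then _ else _) = _
  rw [dif_pos j.isLt]
  rfl

lemma inj_of_rank {p q : ℕ} (M : Matrix (Fin p) (Fin q) ℝ) (h : M.rank = q) :
    Function.Injective M.mulVec := by
  have hco : M.mulVec = M.mulVecLin := rfl
  rw [hco, ← LinearMap.ker_eq_bot]
  have h1 := LinearMap.finrank_range_add_finrank_ker M.mulVecLin
  rw [Module.finrank_fin_fun] at h1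
  have hr : Module.finrank ℝ (LinearMap.range M.mulVecLin) = q := h
  have hk : Module.finrank ℝ (LinearMap.ker M.mulVecLin) = 0 := by omega
  exact Submodule.finrank_eq_zero.mp hk

lemma psiW_inj (hΩW2 : (Ω * W.submatrix Sum.inr id).rank = m) :
    Function.Injective (PsiM m Ω * W).mulVec := by
  have hkey : ∀ (u : Fin m → ℝ) (b : Fin l),
      ((PsiM m Ω * W) *ᵥ u) (Sum.inr b) = ((Ω * W.submatrix Sum.inr id) *ᵥ u) b := by
    intro u b
    rw [← Matrix.mulVec_mulVec, ← Matrix.mulVec_mulVec, PsiM_mulVec_inr]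
    have hW2 : (fun t => (W *ᵥ u) (Sum.inr t)) = W.submatrix Sum.inr id *ᵥ u := by
      funext t
      simp [mulVec, dotProduct, Matrix.submatrix_apply]
    rw [hW2]
  intro v v' hv
  apply inj_of_rank _ hΩW2
  funext b
  rw [← hkey v b, ← hkey v' b, hv]

lemma sketch_nonzero (j : Fin m) (A : Matrix (Fin m ⊕ Fin k) (Fin m) ℝ)
    (hInj : Function.Injective (PsiM m Ω * A).mulVec)
    (hz1 : ∀ c : Fin m, (c : ℕ) < (j : ℕ) → ∀ a : Fin m, (c : ℕ) < (a : ℕ) →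
      A (Sum.inl a) c = 0)
    (hz2 : ∀ c : Fin m, (c : ℕ) < (j : ℕ) → ∀ b, A (Sum.inr b) c = 0) :
    PsiM m Ω *ᵥ trunc (j : ℕ) (fun i => A i j) ≠ 0 := by
  intro h0
  set N := PsiM m Ω * A with hN
  have hsupp : ∀ c : Fin m, (c : ℕ) ≤ (j : ℕ) → ∀ i : Fin m ⊕ Fin l,
      (∀ a : Fin m, (a : ℕ) < (j : ℕ) → i ≠ Sum.inl a) → N i c = 0 := by
    intro c hc i hi
    have hcol : N i c = (PsiM m Ω *ᵥ fun r => A r c) i := mul_col i c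
    rcases lt_or_eq_of_le hc with hcj | hcj
    · cases i with
      | inl a =>
          have ha : (j : ℕ) ≤ (a : ℕ) := by
            by_contra hlt
            exact hi a (Nat.lt_of_not_le hlt) rfl
          rw [hcol, PsiM_mulVec_inl]
          exact hz1 c hcj a (lt_of_lt_of_le hcj ha)
      | inr b =>
          rw [hcol, PsiM_mulVec_inr]
          have hz : (fun t => A (Sum.inr t) c) = (0 : Fin k → ℝ) :=
            funext fun t => hz2 c hcj t
          rw [hz, Matrix.mulVec_zero]
          rfl
    · have hcj' : c = j := Fin.ext hcj
      subst hcj'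
      cases i with
      | inl a =>
          have ha : (c : ℕ) ≤ (a : ℕ) := by
            by_contra hlt
            exact hi a (Nat.lt_of_not_le hlt) rfl
          rw [hcol, PsiM_mulVec_inl]
          have h1 : A (Sum.inl a) c = trunc (c : ℕ) (fun i => A i c) (Sum.inl a) := by
            simp only [trunc, Sum.elim_inl]
            rw [if_pos ha]
          rw [h1, ← PsiM_mulVec_inl Ω (trunc (c : ℕ) fun i => A i c) a, h0]
          rfl
      | inr b =>
          rw [hcol, PsiM_mulVec_inr]
          have h1 : (fun t => A (Sum.inr t) c) =
              fun t => trunc (c : ℕ) (fun i => A i c) (Sum.inr t) := rfl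
          rw [h1, show (Ω *ᵥ fun t => trunc (c : ℕ) (fun i => A i c) (Sum.inr t)) b
              = (PsiM m Ω *ᵥ trunc (c : ℕ) fun i => A i c) (Sum.inr b) from
              (PsiM_mulVec_inr Ω _ b).symm, h0]
          rfl
  have hjm : (j : ℕ) + 1 ≤ m := j.isLt
  let E : (Fin ((j : ℕ) + 1) → ℝ) →ₗ[ℝ] (Fin m → ℝ) :=
    { toFun := fun v c => if h : (c : ℕ) < (j : ℕ) + 1 then v ⟨c, h⟩ else 0
      map_add' := by
        intro v v'
        funext c
        by_cases h : (c : ℕ) < (j : ℕ) + 1 <;> simp only [h, ↓reduceDIte, Pi.add_apply, add_zero]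
      map_smul' := by
        intro r v
        funext c
        by_cases h : (c : ℕ) < (j : ℕ) + 1 <;>
          simp only [h, ↓reduceDIte, Pi.smul_apply, smul_eq_mul, mul_zero, RingHom.id_apply] }
  let φ : (Fin ((j : ℕ) + 1) → ℝ) →ₗ[ℝ] (Fin (j : ℕ) → ℝ) :=
    (LinearMap.funLeft ℝ ℝ fun a : Fin (j : ℕ) =>
      (Sum.inl (Fin.castLE (le_of_lt j.isLt) a) : Fin m ⊕ Fin l)) ∘ₗ N.mulVecLin ∘ₗ E
  have hφinj : Function.Injective φ := by
    rw [injective_iff_map_eq_zero]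
    intro v hv
    have hE : N *ᵥ E v = 0 := by
      funext i
      by_cases hi : ∃ a : Fin m, (a : ℕ) < (j : ℕ) ∧ i = Sum.inl a
      · obtain ⟨a, ha, rfl⟩ := hi
        have h2 := congrFun hv ⟨(a : ℕ), ha⟩
        have h3 : Sum.inl (Fin.castLE (le_of_lt j.isLt) ⟨(a : ℕ), ha⟩) =
            (Sum.inl a : Fin m ⊕ Fin l) := rfl
        simpa [φ, LinearMap.funLeft, h3, Matrix.mulVecLin_apply] using h2
      · push_neg at hi
        show (fun r => N i r) ⬝ᵥ E v = 0
        rw [dotProduct]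
        apply Finset.sum_eq_zero
        intro c _
        by_cases hc : (c : ℕ) < (j : ℕ) + 1
        · rw [hsupp c (Nat.lt_succ_iff.mp hc) i hi, zero_mul]
        · have hEc : E v c = 0 := dif_neg hc
          rw [hEc, mul_zero]
    have hEv : E v = 0 := hInj (by rw [hE, Matrix.mulVec_zero])
    funext t
    have h4 : E v ⟨(t : ℕ), lt_of_lt_of_le t.isLt hjm⟩ = v t := by
      show (if h : ((t : ℕ)) < (j : ℕ) + 1 then v ⟨(t : ℕ), h⟩ else 0) = v t
      rw [dif_pos t.isLt]
    rw [← h4, hEv]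
    rfl
  have hle := LinearMap.finrank_le_finrank_of_injective hφinj
  rw [Module.finrank_fin_fun, Module.finrank_fin_fun] at hle
  omega

end Build
section MainInd

variable {m k l : ℕ} (Ω : Matrix (Fin l) (Fin k) ℝ) (W : Matrix (Fin m ⊕ Fin k) (Fin m) ℝ)

lemma main_induction (hInj0 : Function.Injective (PsiM m Ω * W).mulVec) :
    ∀ j : ℕ, j ≤ m →
      (∀ c : Fin m, (c : ℕ) < j →
        (∀ a : Fin m, (c : ℕ) < (a : ℕ) → Aseq Ω W j (Sum.inl a) c = 0) ∧
        ∀ b, Aseq Ω W j (Sum.inr b) c = 0) ∧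
      Function.Injective (PsiM m Ω * Aseq Ω W j).mulVec ∧
      (∀ t : Fin m, (t : ℕ) < j → PsiM m Ω *ᵥ useq Ω W t ≠ 0) := by
  intro j
  induction j with
  | zero =>
      intro _
      exact ⟨fun c hc => absurd hc (Nat.not_lt_zero _), hInj0,
        fun t ht => absurd ht (Nat.not_lt_zero _)⟩
  | succ j ih =>
      intro hj1
      have hjm : j < m := hj1
      obtain ⟨hz, hInj, hu⟩ := ih (le_of_lt hjm)
      set jf : Fin m := ⟨j, hjm⟩ with hjf
      set x : Fin m ⊕ Fin k → ℝ := fun i => Aseq Ω W j i jf with hx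
      have hsk : PsiM m Ω *ᵥ trunc (jf : ℕ) x ≠ 0 :=
        sketch_nonzero Ω jf (Aseq Ω W j) hInj (fun c hc => (hz c hc).1)
          (fun c hc => (hz c hc).2)
      obtain ⟨hune, hact⟩ := step_main Ω jf x hsk
      have hu' : useq Ω W jf = uvecOf Ω jf x := rfl
      have hsucc : Aseq Ω W (j + 1) = rhouse (PsiM m Ω) (useq Ω W jf) * Aseq Ω W j := by
        have h := Aseq_succ Ω W jf
        rwa [show ((jf : ℕ)) = j from rfl] at h
      have hcolP : ∀ (c : Fin m) (i : Fin m ⊕ Fin k), Aseq Ω W (j + 1) i c =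
          (rhouse (PsiM m Ω) (useq Ω W jf) *ᵥ fun r => Aseq Ω W j r c) i := by
        intro c i
        rw [hsucc]
        exact mul_col i c
      have hune' : PsiM m Ω *ᵥ useq Ω W jf ≠ 0 := by rw [hu']; exact hune
      refine ⟨?_, ?_, ?_⟩
      · intro c hc
        rcases Nat.lt_succ_iff_lt_or_eq.mp hc with hcj | hcj
        · have hfix : (rhouse (PsiM m Ω) (useq Ω W jf) *ᵥ fun r => Aseq Ω W j r c) =
              fun r => Aseq Ω W j r c := by
            rw [hu']
            apply step_preserve
            · intro a ha
              exact (hz c hcj).1 a (lt_of_lt_of_le hcj ha)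
            · intro b
              exact (hz c hcj).2 b
          constructor
          · intro a ha
            rw [hcolP c, hfix]
            exact (hz c hcj).1 a ha
          · intro b
            rw [hcolP c, hfix]
            exact (hz c hcj).2 b
        · have hcf : c = jf := Fin.ext hcj
          have hxc : (fun r => Aseq Ω W j r c) = x := by rw [hcf]
          constructor
          · intro a ha
            have haj : (jf : ℕ) ≤ (a : ℕ) := by
              have : (c : ℕ) = j := hcj
              omega
            have hane : a ≠ jf := by
              intro hh
              rw [hh] at ha
              have : (c : ℕ) = j := hcj
              omega
            rw [hcolP c, hxc, hu', hact]
            show x (Sum.inl a) - uvecOf Ω jf x (Sum.inl a) = 0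
            rw [uvecOf_inl_ge Ω jf x haj hane, sub_self]
          · intro b
            rw [hcolP c, hxc, hu', hact]
            show x (Sum.inr b) - uvecOf Ω jf x (Sum.inr b) = 0
            rw [uvecOf_inr, sub_self]
      · have hpsi : PsiM m Ω * Aseq Ω W (j + 1) =
            house (PsiM m Ω *ᵥ useq Ω W jf) * (PsiM m Ω * Aseq Ω W j) := by
          rw [hsucc, ← Matrix.mul_assoc, mul_rhouse, Matrix.mul_assoc]
        rw [hpsi]
        have hHinj : Function.Injective (house (PsiM m Ω *ᵥ useq Ω W jf)).mulVec :=
          mulVec_injective_of_invol (house_mul_house hune')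
        intro v v' hvv
        apply hInj
        apply hHinj
        rw [Matrix.mulVec_mulVec, Matrix.mulVec_mulVec]
        exact hvv
      · intro t ht
        rcases Nat.lt_succ_iff_lt_or_eq.mp ht with h | h
        · exact hu t h
        · have : t = jf := Fin.ext h
          rw [this]
          exact hune'

lemma telescope (hu : ∀ t : Fin m, PsiM m Ω *ᵥ useq Ω W t ≠ 0) :
    ∀ j : ℕ, j ≤ m →
      ((((List.finRange m).map fun t => rhouse (PsiM m Ω) (useq Ω W t)).take j).prod) *
        Aseq Ω W j = W := by
  intro j
  induction j with
  | zero =>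
      intro _
      show ((((List.finRange m).map fun t => rhouse (PsiM m Ω) (useq Ω W t)).take 0).prod) * W = W
      rw [List.take_zero, List.prod_nil, Matrix.one_mul]
  | succ j ih =>
      intro hj
      have hjm : j < m := hj
      have hlen : j < ((List.finRange m).map fun t =>
          rhouse (PsiM m Ω) (useq Ω W t)).length := by
        simpa using hjm
      rw [List.prod_take_succ _ _ hlen]
      have hget : ((List.finRange m).map fun t =>
          rhouse (PsiM m Ω) (useq Ω W t))[j]'hlen =
          rhouse (PsiM m Ω) (useq Ω W ⟨j, hjm⟩) := by
        simp [List.getElem_map, List.getElem_finRange]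
      have hsucc : Aseq Ω W (j + 1) =
          rhouse (PsiM m Ω) (useq Ω W ⟨j, hjm⟩) * Aseq Ω W j := by
        have h := Aseq_succ Ω W ⟨j, hjm⟩
        rwa [show (((⟨j, hjm⟩ : Fin m) : ℕ)) = j from rfl] at h
      rw [hget, hsucc, Matrix.mul_assoc, ← Matrix.mul_assoc
        (rhouse (PsiM m Ω) (useq Ω W ⟨j, hjm⟩)) (rhouse (PsiM m Ω) (useq Ω W ⟨j, hjm⟩))
        (Aseq Ω W j), rhouse_mul_rhouse (hu ⟨j, hjm⟩), Matrix.one_mul]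
      exact ih (le_of_lt hjm)

end MainInd
end RHQRaux

/-- simultaneous factorizations: if `W = [W₁; W₂]` with `W₂` full rank and
`ΩW₂` full rank, then there exist randomized Householder vectors `u₁,…,u_m` and an
upper-triangular `R` with `W = P(u₁,Ψ)⋯P(u_m,Ψ)·[R;0]`, while
`ΨW = P(Ψu₁)⋯P(Ψu_m)·[R;0]` is the classical Householder QR factorization of `ΨW`,
and the thin Q factor `Q = P(u₁,Ψ)⋯P(u_m,Ψ)·[I_m;0]` satisfies `(ΨQ)ᵀ(ΨQ) = I_m`. -/
theorem rhqr_exists (m k l : ℕ) (W : Matrix (Fin m ⊕ Fin k) (Fin m) ℝ)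
    (Ω : Matrix (Fin l) (Fin k) ℝ)
    (hW2 : (W.submatrix Sum.inr id).rank = m)
    (hΩW2 : (Ω * W.submatrix Sum.inr id).rank = m) :
    let Ψ : Matrix (Fin m ⊕ Fin l) (Fin m ⊕ Fin k) ℝ := Matrix.fromBlocks 1 0 0 Ω
    ∃ (u : Fin m → (Fin m ⊕ Fin k) → ℝ) (R : Matrix (Fin m) (Fin m) ℝ),
      R.BlockTriangular (id : Fin m → Fin m) ∧
      (∀ j, Ψ.mulVec (u j) ≠ 0) ∧
      W = (((List.finRange m).map fun j => rhouse Ψ (u j)).prod) *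
            padTop (β := Fin k) R ∧
      Ψ * W = (((List.finRange m).map fun j => house (Ψ.mulVec (u j))).prod) *
            padTop (β := Fin l) R ∧
      (Ψ * ((((List.finRange m).map fun j => rhouse Ψ (u j)).prod) *
            padTop (β := Fin k) (1 : Matrix (Fin m) (Fin m) ℝ)))ᵀ *
          (Ψ * ((((List.finRange m).map fun j => rhouse Ψ (u j)).prod) *
            padTop (β := Fin k) (1 : Matrix (Fin m) (Fin m) ℝ))) = 1 := by
  intro Ψ
  have hΨ : Ψ = RHQRaux.PsiM m Ω := rfl
  set u : Fin m → (Fin m ⊕ Fin k) → ℝ := RHQRaux.useq Ω W with hu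
  have hInj0 : Function.Injective (RHQRaux.PsiM m Ω * W).mulVec :=
    RHQRaux.psiW_inj Ω W hΩW2
  obtain ⟨hz, hInjm, hun⟩ := RHQRaux.main_induction Ω W hInj0 m le_rfl
  have hune : ∀ t : Fin m, RHQRaux.PsiM m Ω *ᵥ u t ≠ 0 := fun t => hun t t.isLt
  set R : Matrix (Fin m) (Fin m) ℝ :=
    Matrix.of fun a c => RHQRaux.Aseq Ω W m (Sum.inl a) c with hR
  have hpad : padTop (β := Fin k) R = RHQRaux.Aseq Ω W m := by
    ext i c
    cases i with
    | inl a => rfl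
    | inr b => exact ((hz c c.isLt).2 b).symm
  have htel := RHQRaux.telescope Ω W hune m le_rfl
  have htake : (((List.finRange m).map fun t =>
      rhouse (RHQRaux.PsiM m Ω) (u t)).take m) =
      (List.finRange m).map fun t => rhouse (RHQRaux.PsiM m Ω) (u t) := by
    apply List.take_of_length_le
    simp
  rw [htake] at htel
  have hW : W = (((List.finRange m).map fun j => rhouse (RHQRaux.PsiM m Ω) (u j)).prod) *
      padTop (β := Fin k) R := by
    rw [hpad]
    exact htel.symm
  have hpush : RHQRaux.PsiM m Ω *
      (((List.finRange m).map fun j => rhouse (RHQRaux.PsiM m Ω) (u j)).prod) =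
      (((List.finRange m).map fun j => house (RHQRaux.PsiM m Ω *ᵥ u j)).prod) *
        RHQRaux.PsiM m Ω :=
    RHQRaux.theta_mul_prod (RHQRaux.PsiM m Ω) u (List.finRange m)
  refine ⟨u, R, ?_, ?_, ?_, ?_, ?_⟩
  · intro i c hci
    exact (hz c c.isLt).1 i hci
  · intro t
    rw [hΨ]
    exact hune t
  · rw [hΨ]
    exact hW
  · rw [hΨ]
    conv_lhs => rw [hW]
    rw [← Matrix.mul_assoc, hpush, Matrix.mul_assoc, RHQRaux.PsiM_mul_padTop]
  · rw [hΨ]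
    have hQ : RHQRaux.PsiM m Ω *
        ((((List.finRange m).map fun j => rhouse (RHQRaux.PsiM m Ω) (u j)).prod) *
          padTop (β := Fin k) (1 : Matrix (Fin m) (Fin m) ℝ)) =
        (((List.finRange m).map fun j => house (RHQRaux.PsiM m Ω *ᵥ u j)).prod) *
          padTop (β := Fin l) (1 : Matrix (Fin m) (Fin m) ℝ) := by
      rw [← Matrix.mul_assoc, hpush, Matrix.mul_assoc, RHQRaux.PsiM_mul_padTop]
    rw [hQ]
    set H := ((List.finRange m).map fun j => house (RHQRaux.PsiM m Ω *ᵥ u j)).prod with hH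
    set T := padTop (β := Fin l) (1 : Matrix (Fin m) (Fin m) ℝ) with hT
    have horth : Hᵀ * H = 1 :=
      RHQRaux.prod_house_orth (fun t => RHQRaux.PsiM m Ω *ᵥ u t) (List.finRange m)
        (fun t _ => hune t)
    calc (H * T)ᵀ * (H * T) = Tᵀ * Hᵀ * (H * T) := by rw [Matrix.transpose_mul]
      _ = Tᵀ * ((Hᵀ * H) * T) := by rw [Matrix.mul_assoc, Matrix.mul_assoc]
      _ = Tᵀ * T := by rw [horth, Matrix.one_mul]
      _ = 1 := RHQRaux.padTop_transpose_mul_self
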